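/- For any G ∈ 𝒢* with terminal level k+1 representing a string x of length 2^k, and the associated level strings S_1,...,S_{k+1}, one has ∑_{i=1}^{k+1} |S_i| ≤ |V(G')| + |V(G)|, where G' is the quasi-reduced OBDD of x (vertices = dyadic substring set S(x)) and V(G) is the vertex set of G. -/

import Mathlib

/-- The class `𝒢` of level-labeled rooted DAGs used to represent data strings:
finitely many vertices, a root at level 1, exactly two terminal vertices `T0, T1` at a
common level `k+1`, every nonterminal vertex has out-edges labeled `0` and `1` ending at
distinct vertices, levels strictly increase along edges, and every vertex is reachable
from the root.  (A vertex is terminal iff it equals `T0` or `T1`; `succ0, succ1` are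
only meaningful on nonterminal vertices.) -/
structure BDD (V : Type) [Fintype V] [DecidableEq V] where
  k : ℕ
  root : V
  T0 : V
  T1 : V
  succ0 : V → V
  succ1 : V → V
  level : V → ℕ
  k_pos : 1 ≤ k
  T0_ne_T1 : T0 ≠ T1
  root_level : level root = 1
  T0_level : level T0 = k + 1
  T1_level : level T1 = k + 1
  level_le : ∀ v, level v ≤ k + 1
  succ_ne : ∀ v, v ≠ T0 → v ≠ T1 → succ0 v ≠ succ1 v
  level_lt_succ0 : ∀ v, v ≠ T0 → v ≠ T1 → level v < level (succ0 v)
  level_lt_succ1 : ∀ v, v ≠ T0 → v ≠ T1 → level v < level (succ1 v)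
  reachable : ∀ v, Relation.ReflTransGen
    (fun a b => a ≠ T0 ∧ a ≠ T1 ∧ (b = succ0 a ∨ b = succ1 a)) root v

/-- `φ` is the canonical string map of `G`: `φ(T0) = 0`, `φ(T1) = 1`, and for a
nonterminal vertex `V` with `0`- and `1`-successors `V₀, V₁`,
`φ(V) = φ(V₀)^{2^{L(V₀)−L(V)−1}} φ(V₁)^{2^{L(V₁)−L(V)−1}}`
(the defining recursion of the canonical map; it determines `φ` uniquely). -/
def IsPhi {V : Type} [Fintype V] [DecidableEq V] (G : BDD V) (φ : V → List Bool) : Prop :=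
  φ G.T0 = [false] ∧ φ G.T1 = [true] ∧
  ∀ v, v ≠ G.T0 → v ≠ G.T1 →
    φ v = (List.replicate (2 ^ (G.level (G.succ0 v) - G.level v - 1)) (φ (G.succ0 v))).flatten
        ++ (List.replicate (2 ^ (G.level (G.succ1 v) - G.level v - 1)) (φ (G.succ1 v))).flatten

/-- The list of distinct entries of a sequence, in order of first left-to-right
appearance. -/
def firstOccs {A : Type*} [DecidableEq A] : List A → List A
  | [] => []
  | a :: rest => a :: (firstOccs rest).filter (· ≠ a)

variable {V : Type} [Fintype V] [DecidableEq V]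

/-- One step of the recursive generation of the level strings: from `S_{i−1}`, take the
first occurrences of its distinct symbols; a symbol `A_m^q` with `q > 1` produces
`A_m^{q−1}`; a symbol `A_m` (i.e. `q = 1`, a nonterminal vertex) produces the pair
`A_{m₀}^{L(A_{m₀})−L(A_m)}, A_{m₁}^{L(A_{m₁})−L(A_m)}` where `A_{m₀}, A_{m₁}` are its
`0`- and `1`-successors.  A symbol `A_m^q` is represented as the pair `(A_m, q)`. -/
def nextS (G : BDD V) (s : List (V × ℕ)) : List (V × ℕ) :=
  (firstOccs s).flatMap fun p =>
    if 1 < p.2 then [(p.1, p.2 - 1)]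
    else [(G.succ0 p.1, G.level (G.succ0 p.1) - G.level p.1),
          (G.succ1 p.1, G.level (G.succ1 p.1) - G.level p.1)]

/-- The level strings: `Sstr G (i-1)` is the paper's `S_i`, so `Sstr G 0 = S_1 = (A_1)`
consists of the root alone. -/
def Sstr (G : BDD V) : ℕ → List (V × ℕ)
  | 0 => [(G.root, 1)]
  | i + 1 => nextS G (Sstr G i)

/-- `Ŝ_i` (for the paper's index `i ≥ 2`): the subsequence of `S_i` arising from the
substitutions for the distinct entries of `S_{i−1}` of the form `A_m` (i.e. `q = 1`). -/
def Shat (G : BDD V) (i : ℕ) : List (V × ℕ) :=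
  (firstOccs (Sstr G (i - 2))).flatMap fun p =>
    if 1 < p.2 then []
    else [(G.succ0 p.1, G.level (G.succ0 p.1) - G.level p.1),
          (G.succ1 p.1, G.level (G.succ1 p.1) - G.level p.1)]

/-- The vertices that have appeared in the paper's strings `S_1, ..., S_{i−1}`. -/
def appearedBefore (G : BDD V) (i : ℕ) : List V :=
  (List.range (i - 1)).flatMap fun j => (Sstr G j).map Prod.fst

/-- `Q_i`: the sum of the exponents `q` over the distinct Type II entries `A_m^q` of
`Ŝ_i` (those whose vertex `A_m` has not appeared in `S_1, ..., S_{i−1}`). -/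
def Qsum (G : BDD V) (i : ℕ) : ℕ :=
  (((firstOccs (Shat G i)).filter
      (fun p => decide (p.1 ∉ appearedBefore G i))).map Prod.snd).sum

/-- The dyadic substring set `S(x)` of a binary string `x` of length `2^k`: the vertex
set of the quasi-reduced OBDD `G'` of `x`. -/
def dyadicSet (k : ℕ) (x : List Bool) : Finset (List Bool) :=
  (Finset.range (k + 1)).biUnion fun i =>
    (Finset.range (2 ^ (k - i))).image fun j => (x.drop (j * 2 ^ i)).take (2 ^ i)

namespace TLC

def rep (u : List Bool) (n : ℕ) : List Bool := (List.replicate n u).flatten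

@[simp] lemma rep_length (u : List Bool) (n : ℕ) : (rep u n).length = n * u.length := by
  rw [rep, List.length_flatten, List.map_replicate, List.sum_replicate, smul_eq_mul]

lemma rep_add (u : List Bool) (m n : ℕ) : rep u (m + n) = rep u m ++ rep u n := by
  rw [rep, rep, rep, List.replicate_add, List.flatten_append]

@[simp] lemma rep_one (u : List Bool) : rep u 1 = u := by simp [rep]

lemma take_rep (u : List Bool) {m n : ℕ} (h : m ≤ n) :
    (rep u n).take (m * u.length) = rep u m := by
  have hn : n = m + (n - m) := by omega
  rw [hn, rep_add]
  exact List.take_left' (by simp)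

lemma pow2_mul (a b : ℕ) : (2:ℕ)^a * 2^b = 2^(a+b) := (pow_add 2 a b).symm

lemma rep_cancel {u t : List Bool} {a b c d : ℕ} (h : rep u (2^a) = rep t (2^b))
    (hu : u.length = 2^c) (ht : t.length = 2^d) (hdc : d ≤ c) (habcd : a + c = b + d) :
    u = rep t (2^(c-d)) := by
  have h1 : (rep u (2^a)).take (2^c) = u := by
    have := take_rep u (Nat.one_le_two_pow (n := a))
    rw [hu, one_mul] at this
    simpa using this
  have hle : 2^(c-d) ≤ 2^b := Nat.pow_le_pow_right (by norm_num) (by omega)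
  have h2 : (rep t (2^b)).take (2^c) = rep t (2^(c-d)) := by
    have := take_rep t hle
    rw [ht, pow2_mul] at this
    have he : c - d + d = c := by omega
    rwa [he] at this
  rw [← h1, h, h2]


variable {V : Type} [Fintype V] [DecidableEq V]

lemma mem_of_mem_firstOccs {A : Type*} [DecidableEq A] :
    ∀ {l : List A} {a : A}, a ∈ firstOccs l → a ∈ l := by
  intro l
  induction l with
  | nil => intro a h; simpa [firstOccs] using h
  | cons b t ih =>
    intro a h
    rw [firstOccs, List.mem_cons] at h
    rcases h with h | h
    · simp [h]
    · exact List.mem_cons_of_mem _ (ih (List.mem_of_mem_filter h))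

lemma firstOccs_nodup {A : Type*} [DecidableEq A] : ∀ (l : List A), (firstOccs l).Nodup := by
  intro l
  induction l with
  | nil => simp [firstOccs]
  | cons b t ih =>
    rw [firstOccs]
    refine List.Nodup.cons ?_ (ih.filter _)
    intro hb
    have := List.of_mem_filter hb
    simp at this

section G
variable (G : BDD V) (φ : V → List Bool)

lemma terminal_of_level_eq (v : V) (hv : G.level v = G.k + 1) : v = G.T0 ∨ v = G.T1 := by
  by_contra h
  push_neg at h
  have h1 := G.level_lt_succ0 v h.1 h.2
  have h2 := G.level_le (G.succ0 v)
  omega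

lemma nonterminal_of_level_le (v : V) (hv : G.level v ≤ G.k) : v ≠ G.T0 ∧ v ≠ G.T1 := by
  constructor <;> rintro rfl
  · have := G.T0_level; omega
  · have := G.T1_level; omega

lemma phi_rec (hφ : IsPhi G φ) (v : V) (h0 : v ≠ G.T0) (h1 : v ≠ G.T1) :
    φ v = rep (φ (G.succ0 v)) (2 ^ (G.level (G.succ0 v) - G.level v - 1))
        ++ rep (φ (G.succ1 v)) (2 ^ (G.level (G.succ1 v) - G.level v - 1)) :=
  hφ.2.2 v h0 h1

lemma phi_length_aux (hφ : IsPhi G φ) :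
    ∀ n (v : V), G.k + 1 - G.level v ≤ n → (φ v).length = 2 ^ (G.k + 1 - G.level v) := by
  intro n
  induction n with
  | zero =>
    intro v hv
    have hle := G.level_le v
    have hl : G.level v = G.k + 1 := by omega
    rcases terminal_of_level_eq G v hl with rfl | rfl
    · rw [hφ.1]; simp [hl]
    · rw [hφ.2.1]; simp [hl]
  | succ n ih =>
    intro v hv
    have hle := G.level_le v
    by_cases hterm : v = G.T0 ∨ v = G.T1
    · rcases hterm with rfl | rfl
      · rw [hφ.1]; simp [G.T0_level]
      · rw [hφ.2.1]; simp [G.T1_level]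
    · push_neg at hterm
      have hs0 := G.level_lt_succ0 v hterm.1 hterm.2
      have hs1 := G.level_lt_succ1 v hterm.1 hterm.2
      have hle0 := G.level_le (G.succ0 v)
      have hle1 := G.level_le (G.succ1 v)
      have l0 : (φ (G.succ0 v)).length = 2 ^ (G.k + 1 - G.level (G.succ0 v)) :=
        ih (G.succ0 v) (by omega)
      have l1 : (φ (G.succ1 v)).length = 2 ^ (G.k + 1 - G.level (G.succ1 v)) :=
        ih (G.succ1 v) (by omega)
      rw [phi_rec G φ hφ v hterm.1 hterm.2, List.length_append, rep_length, rep_length,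
        l0, l1, pow2_mul, pow2_mul]
      have e0 : G.level (G.succ0 v) - G.level v - 1 + (G.k + 1 - G.level (G.succ0 v))
          = G.k - G.level v := by omega
      have e1 : G.level (G.succ1 v) - G.level v - 1 + (G.k + 1 - G.level (G.succ1 v))
          = G.k - G.level v := by omega
      rw [e0, e1, ← two_mul, ← pow_succ']
      congr 1
      omega

lemma phi_length (hφ : IsPhi G φ) (v : V) :
    (φ v).length = 2 ^ (G.k + 1 - G.level v) :=
  phi_length_aux G φ hφ (G.k + 1) v (by omega)

lemma claimC (hφ : IsPhi G φ) (hinj : Function.Injective φ) :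
    ∀ n (v w : V), G.k + 1 - G.level v ≤ n → G.level v ≤ G.level w →
      φ v = rep (φ w) (2 ^ (G.level w - G.level v)) → v = w := by
  intro n
  induction n with
  | zero =>
    intro v w hn hvw h
    have h1 := G.level_le v
    have h2 := G.level_le w
    have hl : G.level v = G.level w := by omega
    rw [hl] at h
    simp at h
    exact hinj h
  | succ n ih =>
    intro v w hn hvw h
    rcases eq_or_lt_of_le hvw with heq | hlt
    · rw [heq] at h; simp at h; exact hinj h
    · -- v is nonterminal
      have hlew := G.level_le w
      have hterm : v ≠ G.T0 ∧ v ≠ G.T1 := nonterminal_of_level_le G v (by omega)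
      have hs0 := G.level_lt_succ0 v hterm.1 hterm.2
      have hs1 := G.level_lt_succ1 v hterm.1 hterm.2
      have hle0 := G.level_le (G.succ0 v)
      have hle1 := G.level_le (G.succ1 v)
      set L := G.level v with hL
      set Lw := G.level w with hLw
      set L0 := G.level (G.succ0 v) with hL0
      set L1 := G.level (G.succ1 v) with hL1
      have hrec := phi_rec G φ hφ v hterm.1 hterm.2
      have hsplit : rep (φ w) (2 ^ (Lw - L)) = rep (φ w) (2 ^ (Lw - L - 1))
          ++ rep (φ w) (2 ^ (Lw - L - 1)) := by
        obtain ⟨m, hm⟩ : ∃ m, Lw - L = m + 1 := ⟨Lw - L - 1, by omega⟩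
        have hm1 : Lw - L - 1 = m := by omega
        rw [hm1, hm, pow_succ, mul_two, rep_add]
      rw [hrec, hsplit] at h
      have hlen : (rep (φ (G.succ0 v)) (2 ^ (L0 - L - 1))).length
          = (rep (φ w) (2 ^ (Lw - L - 1))).length := by
        rw [rep_length, rep_length, phi_length G φ hφ, phi_length G φ hφ,
          ← hL0, ← hLw, pow2_mul, pow2_mul]
        congr 1
        omega
      obtain ⟨hA, hB⟩ := List.append_inj h hlen
      -- generic step: from rep (φ s) (2^(Ls-L-1)) = rep (φ w) (2^(Lw-L-1)) deduce s = w
      have key : ∀ s : V, G.level v < G.level s →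
          rep (φ s) (2 ^ (G.level s - L - 1)) = rep (φ w) (2 ^ (Lw - L - 1)) → s = w := by
        intro s hls hrep
        have hles := G.level_le s
        rcases le_total (G.level w) (G.level s) with hsw | hsw
        · -- φ w = rep (φ s) ...
          have := rep_cancel (u := φ w) (t := φ s) (a := Lw - L - 1) (b := G.level s - L - 1)
            (c := G.k + 1 - Lw) (d := G.k + 1 - G.level s) hrep.symm
            (phi_length G φ hφ w) (phi_length G φ hφ s) (by omega) (by omega)
          have he : G.k + 1 - Lw - (G.k + 1 - G.level s) = G.level s - Lw := by omega
          rw [he] at this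
          exact (ih w s (by omega) hsw this).symm
        · have := rep_cancel (u := φ s) (t := φ w) (a := G.level s - L - 1) (b := Lw - L - 1)
            (c := G.k + 1 - G.level s) (d := G.k + 1 - Lw) hrep
            (phi_length G φ hφ s) (phi_length G φ hφ w) (by omega) (by omega)
          have he : G.k + 1 - G.level s - (G.k + 1 - Lw) = Lw - G.level s := by omega
          rw [he] at this
          exact ih s w (by omega) hsw this
      have k0 : G.succ0 v = w := key (G.succ0 v) hs0 hA
      have k1 : G.succ1 v = w := key (G.succ1 v) hs1 hB
      exact absurd (k0.trans k1.symm) (G.succ_ne v hterm.1 hterm.2)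

end G

section G2
variable (G : BDD V) (φ : V → List Bool)

def blk (p : V × ℕ) : List Bool := rep (φ p.1) (2 ^ (p.2 - 1))

def Bset (j : ℕ) : Finset (List Bool) :=
  (Finset.range (2 ^ j)).image fun t =>
    ((φ G.root).drop (t * 2 ^ (G.k - j))).take (2 ^ (G.k - j))

lemma xlen (hφ : IsPhi G φ) : (φ G.root).length = 2 ^ G.k := by
  rw [phi_length G φ hφ, G.root_level]
  norm_num

lemma Bset_subset {j : ℕ} (hj : j ≤ G.k) :
    Bset G φ j ⊆ dyadicSet G.k (φ G.root) := by
  intro y hy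
  refine Finset.mem_biUnion.mpr ⟨G.k - j, Finset.mem_range.mpr (by omega), ?_⟩
  have hk : G.k - (G.k - j) = j := by omega
  rw [hk]
  exact hy

lemma length_of_mem_Bset (hφ : IsPhi G φ) {j : ℕ} {y : List Bool} (hj : j ≤ G.k)
    (hy : y ∈ Bset G φ j) : y.length = 2 ^ (G.k - j) := by
  obtain ⟨t, ht, rfl⟩ := Finset.mem_image.mp hy
  have ht' : t < 2 ^ j := Finset.mem_range.mp ht
  have hmul : (t + 1) * 2 ^ (G.k - j) ≤ 2 ^ G.k := by
    calc (t + 1) * 2 ^ (G.k - j) ≤ 2 ^ j * 2 ^ (G.k - j) :=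
          Nat.mul_le_mul_right _ (by omega)
      _ = 2 ^ G.k := by rw [pow2_mul]; congr 1; omega
  have hm2 : (t + 1) * 2 ^ (G.k - j) = t * 2 ^ (G.k - j) + 2 ^ (G.k - j) := by ring
  rw [List.length_take, List.length_drop, xlen G φ hφ]
  omega

lemma half_mem (hφ : IsPhi G φ) {j : ℕ} (hj : j + 1 ≤ G.k) {y : List Bool}
    (hy : y ∈ Bset G φ j) :
    y.take (2 ^ (G.k - (j + 1))) ∈ Bset G φ (j + 1) ∧
    y.drop (2 ^ (G.k - (j + 1))) ∈ Bset G φ (j + 1) := by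
  obtain ⟨t, ht, rfl⟩ := Finset.mem_image.mp hy
  have ht' : t < 2 ^ j := Finset.mem_range.mp ht
  have hkj : G.k - j = (G.k - (j + 1)) + 1 := by omega
  have hpow : (2:ℕ) ^ (G.k - j) = 2 ^ (G.k - (j + 1)) * 2 := by rw [hkj, pow_succ]
  have hps : (2:ℕ) ^ (j + 1) = 2 ^ j * 2 := pow_succ 2 j
  constructor
  · refine Finset.mem_image.mpr ⟨2 * t, Finset.mem_range.mpr (by omega), ?_⟩
    have e1 : 2 * t * 2 ^ (G.k - (j + 1)) = t * 2 ^ (G.k - j) := by rw [hpow]; ring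
    rw [e1, List.take_take, min_eq_left (by omega)]
  · refine Finset.mem_image.mpr ⟨2 * t + 1, Finset.mem_range.mpr (by omega), ?_⟩
    have e1 : (2 * t + 1) * 2 ^ (G.k - (j + 1))
        = t * 2 ^ (G.k - j) + 2 ^ (G.k - (j + 1)) := by rw [hpow]; ring
    rw [List.drop_take, List.drop_drop, e1]
    congr 1
    omega

lemma sstr_good (hφ : IsPhi G φ) :
    ∀ j, j ≤ G.k → ∀ p ∈ Sstr G j,
      (1 ≤ p.2 ∧ G.level p.1 = j + p.2) ∧ blk φ p ∈ Bset G φ j := by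
  intro j
  induction j with
  | zero =>
    intro _ p hp
    simp only [Sstr, List.mem_singleton] at hp
    subst hp
    refine ⟨⟨by simp, by simp [G.root_level]⟩, ?_⟩
    have hb : blk φ (G.root, 1) = φ G.root := by
      show rep (φ G.root) (2 ^ (1 - 1)) = _
      simp
    rw [hb]
    refine Finset.mem_image.mpr ⟨0, Finset.mem_range.mpr (by positivity), ?_⟩
    rw [Nat.zero_mul, List.drop_zero]
    exact List.take_of_length_le (by rw [xlen G φ hφ]; exact Nat.pow_le_pow_right (by norm_num) (by omega))
  | succ j ih =>
    intro hj p hp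
    have hS : Sstr G (j + 1) = nextS G (Sstr G j) := rfl
    rw [hS, nextS, List.mem_flatMap] at hp
    obtain ⟨a, ha, hpa⟩ := hp
    have haS := mem_of_mem_firstOccs ha
    obtain ⟨⟨hq1, hlev⟩, hmem⟩ := ih (by omega) a haS
    have hlea := G.level_le a.1
    by_cases hcase : 1 < a.2
    · rw [if_pos hcase, List.mem_singleton] at hpa
      subst hpa
      constructor
      · exact ⟨by omega, by show G.level a.1 = j + 1 + (a.2 - 1); omega⟩
      · have hsplit : blk φ a = blk φ (a.1, a.2 - 1) ++ blk φ (a.1, a.2 - 1) := by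
          show rep (φ a.1) (2 ^ (a.2 - 1)) = rep (φ a.1) (2 ^ (a.2 - 1 - 1)) ++ rep (φ a.1) (2 ^ (a.2 - 1 - 1))
          obtain ⟨m, hm⟩ : ∃ m, a.2 - 1 = m + 1 := ⟨a.2 - 2, by omega⟩
          have hm1 : a.2 - 1 - 1 = m := by omega
          rw [hm1, hm, pow_succ, mul_two, rep_add]
        have hlen2 : (blk φ (a.1, a.2 - 1)).length = 2 ^ (G.k - (j + 1)) := by
          show (rep (φ a.1) (2 ^ (a.2 - 1 - 1))).length = _
          rw [rep_length, phi_length G φ hφ, pow2_mul]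
          congr 1
          omega
        have h2 : (blk φ a).take (2 ^ (G.k - (j + 1))) = blk φ (a.1, a.2 - 1) := by
          rw [hsplit]
          exact List.take_left' hlen2
        rw [← h2]
        exact (half_mem G φ hφ (by omega) hmem).1
    · rw [if_neg hcase] at hpa
      have hq : a.2 = 1 := by omega
      have hLa : G.level a.1 = j + 1 := by omega
      have hnt := nonterminal_of_level_le G a.1 (by omega)
      have hs0 := G.level_lt_succ0 a.1 hnt.1 hnt.2
      have hs1 := G.level_lt_succ1 a.1 hnt.1 hnt.2
      have hle0 := G.level_le (G.succ0 a.1)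
      have hle1 := G.level_le (G.succ1 a.1)
      have hba : blk φ a = φ a.1 := by
        show rep (φ a.1) (2 ^ (a.2 - 1)) = _
        rw [hq]
        simp
      have hrec := phi_rec G φ hφ a.1 hnt.1 hnt.2
      have hlenL : (rep (φ (G.succ0 a.1)) (2 ^ (G.level (G.succ0 a.1) - G.level a.1 - 1))).length
          = 2 ^ (G.k - (j + 1)) := by
        rw [rep_length, phi_length G φ hφ, pow2_mul]
        congr 1
        omega
      rcases (by simpa using hpa :
          p = (G.succ0 a.1, G.level (G.succ0 a.1) - G.level a.1) ∨
          p = (G.succ1 a.1, G.level (G.succ1 a.1) - G.level a.1)) with hpa | hpa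
      · subst hpa
        refine ⟨⟨by show 1 ≤ G.level (G.succ0 a.1) - G.level a.1; omega,
            by show G.level (G.succ0 a.1) = j + 1 + (G.level (G.succ0 a.1) - G.level a.1); omega⟩, ?_⟩
        have h2 : (blk φ a).take (2 ^ (G.k - (j + 1)))
            = blk φ (G.succ0 a.1, G.level (G.succ0 a.1) - G.level a.1) := by
          rw [hba, hrec]
          exact List.take_left' hlenL
        rw [← h2]
        exact (half_mem G φ hφ (by omega) hmem).1
      · subst hpa
        refine ⟨⟨by show 1 ≤ G.level (G.succ1 a.1) - G.level a.1; omega,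
            by show G.level (G.succ1 a.1) = j + 1 + (G.level (G.succ1 a.1) - G.level a.1); omega⟩, ?_⟩
        have h2 : (blk φ a).drop (2 ^ (G.k - (j + 1)))
            = blk φ (G.succ1 a.1, G.level (G.succ1 a.1) - G.level a.1) := by
          rw [hba, hrec]
          exact List.drop_left' hlenL
        rw [← h2]
        exact (half_mem G φ hφ (by omega) hmem).2

lemma blk_injOn (hφ : IsPhi G φ) (hinj : Function.Injective φ) {j : ℕ} (hj : j ≤ G.k) :
    ∀ p ∈ Sstr G j, ∀ p' ∈ Sstr G j, blk φ p = blk φ p' → p = p' := by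
  have aux : ∀ p ∈ Sstr G j, ∀ p' ∈ Sstr G j,
      G.level p'.1 ≤ G.level p.1 → blk φ p = blk φ p' → p = p' := by
    intro p hp p' hp' hlev h
    obtain ⟨⟨hq, hl⟩, -⟩ := sstr_good G φ hφ j hj p hp
    obtain ⟨⟨hq', hl'⟩, -⟩ := sstr_good G φ hφ j hj p' hp'
    have hle := G.level_le p.1
    have hle' := G.level_le p'.1
    have hc := rep_cancel (u := φ p'.1) (t := φ p.1) (a := p'.2 - 1) (b := p.2 - 1)
      (c := G.k + 1 - G.level p'.1) (d := G.k + 1 - G.level p.1) h.symm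
      (phi_length G φ hφ _) (phi_length G φ hφ _) (by omega) (by omega)
    have he : G.k + 1 - G.level p'.1 - (G.k + 1 - G.level p.1)
        = G.level p.1 - G.level p'.1 := by omega
    rw [he] at hc
    have h1 : p'.1 = p.1 := claimC G φ hφ hinj (G.k + 1) p'.1 p.1 (by omega) hlev hc
    have h2 : p'.2 = p.2 := by rw [h1] at hl'; omega
    exact (Prod.ext h1 h2).symm
  intro p hp p' hp' h
  rcases le_total (G.level p'.1) (G.level p.1) with hl | hl
  · exact aux p hp p' hp' hl h
  · exact (aux p' hp' p hp hl h.symm).symm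

lemma length_flatMap_branch (l : List (V × ℕ)) :
    (l.flatMap fun p => if 1 < p.2 then [(p.1, p.2 - 1)]
      else [(G.succ0 p.1, G.level (G.succ0 p.1) - G.level p.1),
            (G.succ1 p.1, G.level (G.succ1 p.1) - G.level p.1)]).length
    = l.length + (l.filter fun p => decide (p.2 ≤ 1)).length := by
  induction l with
  | nil => simp
  | cons a t ih =>
    rw [List.flatMap_cons, List.length_append, ih, List.filter_cons, List.length_cons]
    by_cases h : 1 < a.2
    · rw [if_pos h]
      have : decide (a.2 ≤ 1) = false := by simp; omega
      rw [this]
      simp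
      omega
    · rw [if_neg h]
      have : decide (a.2 ≤ 1) = true := by simp; omega
      rw [this]
      simp
      omega

end G2
end TLC

open TLC in
/-- For `G ∈ 𝒢*` with terminal level `k+1` representing a string `x` of length `2^k`,
the level strings `S_1, ..., S_{k+1}` satisfy
`∑_{i=1}^{k+1} |S_i| ≤ |V(G')| + |V(G)|`, where `G'` is the quasi-reduced OBDD of `x`
(its vertex set is the dyadic substring set `S(x)`). -/
theorem total_length_le_card (G : BDD V) (φ : V → List Bool)
    (hφ : IsPhi G φ) (hinj : Function.Injective φ) :
    ∑ i ∈ Finset.Icc 1 (G.k + 1), (Sstr G (i - 1)).length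
      ≤ (dyadicSet G.k (φ G.root)).card + Fintype.card V := by
  classical
  set F : ℕ → List (V × ℕ) := fun j => firstOccs (Sstr G j) with hF
  set Fil : ℕ → List (V × ℕ) := fun j => (F j).filter (fun p => decide (p.2 ≤ 1)) with hFil
  set A : ℕ → Finset (List Bool) := fun j => ((F j).map (blk φ)).toFinset with hA
  set C : ℕ → Finset V := fun j => ((Fil j).map Prod.fst).toFinset with hC
  -- rewrite the sum
  have hsum1 : ∑ i ∈ Finset.Icc 1 (G.k + 1), (Sstr G (i - 1)).length
      = ∑ j ∈ Finset.range (G.k + 1), (Sstr G j).length := by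
    rw [show Finset.Icc 1 (G.k + 1) = Finset.image (fun j => j + 1) (Finset.range (G.k + 1)) from by
      ext i
      simp only [Finset.mem_Icc, Finset.mem_image, Finset.mem_range]
      constructor
      · rintro ⟨h1, h2⟩; exact ⟨i - 1, by omega, by omega⟩
      · rintro ⟨j, hj, rfl⟩; omega]
    rw [Finset.sum_image (by intro a _ b _ h; simp only at h; omega)]
    simp
  have hkey : ∀ j, (Sstr G (j + 1)).length = (F j).length + (Fil j).length := by
    intro j
    have : Sstr G (j + 1) = nextS G (Sstr G j) := rfl
    rw [this, nextS]
    exact length_flatMap_branch G (firstOccs (Sstr G j))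
  have hsum2 : ∑ j ∈ Finset.range (G.k + 1), (Sstr G j).length
      = 1 + (∑ j ∈ Finset.range G.k, (F j).length + ∑ j ∈ Finset.range G.k, (Fil j).length) := by
    rw [Finset.sum_range_succ']
    simp only [hkey]
    rw [Finset.sum_add_distrib]
    simp [Sstr]
    omega
  -- Bound A
  have hAcard : ∀ j < G.k, (A j).card = (F j).length := by
    intro j hj
    have hnd : ((F j).map (blk φ)).Nodup := by
      refine List.Nodup.map_on ?_ (firstOccs_nodup _)
      intro p hp p' hp' h
      exact blk_injOn G φ hφ hinj (by omega) p (mem_of_mem_firstOccs hp) p'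
        (mem_of_mem_firstOccs hp') h
    exact (List.toFinset_card_of_nodup hnd).trans (by rw [List.length_map])
  have hAB : ∀ j < G.k, (A j : Finset (List Bool)) ⊆ Bset G φ j := by
    intro j hj y hy
    rw [hA, List.mem_toFinset, List.mem_map] at hy
    obtain ⟨p, hp, rfl⟩ := hy
    exact (sstr_good G φ hφ j (by omega) p (mem_of_mem_firstOccs hp)).2
  have hAdisj : ∀ j ∈ Finset.range G.k, ∀ j' ∈ Finset.range G.k, j ≠ j' →
      Disjoint (A j) (A j') := by
    intro j hj j' hj' hne
    rw [Finset.mem_range] at hj hj'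
    rw [Finset.disjoint_left]
    intro y hy hy'
    have l1 := length_of_mem_Bset G φ hφ (by omega) (hAB j hj hy)
    have l2 := length_of_mem_Bset G φ hφ (by omega) (hAB j' hj' hy')
    rw [l1] at l2
    have := Nat.pow_right_injective (le_refl 2) l2
    omega
  have hboundA : ∑ j ∈ Finset.range G.k, (F j).length ≤ (dyadicSet G.k (φ G.root)).card := by
    calc ∑ j ∈ Finset.range G.k, (F j).length
        = ∑ j ∈ Finset.range G.k, (A j).card := by
          refine Finset.sum_congr rfl ?_
          intro j hj
          exact (hAcard j (Finset.mem_range.mp hj)).symm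
      _ = ((Finset.range G.k).biUnion A).card := (Finset.card_biUnion hAdisj).symm
      _ ≤ (dyadicSet G.k (φ G.root)).card := by
          refine Finset.card_le_card ?_
          intro y hy
          rw [Finset.mem_biUnion] at hy
          obtain ⟨j, hj, hy⟩ := hy
          rw [Finset.mem_range] at hj
          exact Bset_subset G φ (by omega) (hAB j hj hy)
  -- Bound B
  have hClevel : ∀ j < G.k, ∀ v ∈ C j, G.level v = j + 1 := by
    intro j hj v hv
    rw [hC, List.mem_toFinset, List.mem_map] at hv
    obtain ⟨p, hp, rfl⟩ := hv
    have hp1 := List.of_mem_filter hp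
    have hp2 := List.mem_of_mem_filter hp
    have := (sstr_good G φ hφ j (by omega) p (mem_of_mem_firstOccs hp2)).1
    simp at hp1
    omega
  have hCcard : ∀ j < G.k, (C j).card = (Fil j).length := by
    intro j hj
    have hnd : ((Fil j).map Prod.fst).Nodup := by
      refine List.Nodup.map_on ?_ ((firstOccs_nodup _).filter _)
      intro p hp p' hp' h
      have h1 := (sstr_good G φ hφ j (by omega) p
        (mem_of_mem_firstOccs (List.mem_of_mem_filter hp))).1
      have h2 := (sstr_good G φ hφ j (by omega) p'
        (mem_of_mem_firstOccs (List.mem_of_mem_filter hp'))).1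
      have : p.2 = p'.2 := by rw [h] at h1; omega
      exact Prod.ext h this
    exact (List.toFinset_card_of_nodup hnd).trans (by rw [List.length_map])
  have hCdisj : ∀ j ∈ Finset.range G.k, ∀ j' ∈ Finset.range G.k, j ≠ j' →
      Disjoint (C j) (C j') := by
    intro j hj j' hj' hne
    rw [Finset.mem_range] at hj hj'
    rw [Finset.disjoint_left]
    intro v hv hv'
    have := hClevel j hj v hv
    have := hClevel j' hj' v hv'
    omega
  have hT0 : G.T0 ∉ (Finset.range G.k).biUnion C := by
    rw [Finset.mem_biUnion]
    rintro ⟨j, hj, hv⟩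
    rw [Finset.mem_range] at hj
    have := hClevel j hj _ hv
    have := G.T0_level
    omega
  have hboundB : 1 + ∑ j ∈ Finset.range G.k, (Fil j).length ≤ Fintype.card V := by
    calc 1 + ∑ j ∈ Finset.range G.k, (Fil j).length
        = 1 + ∑ j ∈ Finset.range G.k, (C j).card := by
          congr 1
          refine Finset.sum_congr rfl ?_
          intro j hj
          exact (hCcard j (Finset.mem_range.mp hj)).symm
      _ = 1 + ((Finset.range G.k).biUnion C).card := by rw [Finset.card_biUnion hCdisj]
      _ = (insert G.T0 ((Finset.range G.k).biUnion C)).card := by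
          rw [Finset.card_insert_of_notMem hT0]; omega
      _ ≤ Fintype.card V := by
          rw [← Finset.card_univ]
          exact Finset.card_le_card (Finset.subset_univ _)
  rw [hsum1, hsum2]
  omega
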